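/- Let G be a countable group with a finite-index normal abelian subgroup G', R ⊆ G a finite set of coset representatives for G/G' with 1_G ∈ R, (Γ_i)_{i≥1} a strictly decreasing sequence of finite-index subgroups of G' (each of finite index in G) with ⋂_{i≥1} Γ_i = {1_G}, and (D_i)_{i≥1} finite subsets of G' such that for every i: D_i is a transversal for G'/Γ_i, 1_G ∈ D_i ⊆ D_{i+1}, G' = ⋃_{i≥1} D_i, and D_j = ⋃_{γ ∈ D_j ∩ Γ_i} γD_i for all i < j. Define J(0) = {1_G} and recursively J(m) = D_m \ ⋃_{i=0}^{m-1} Γ_{i+1}J(i) for m ≥ 1. Let m ≥ 2, Σ = {1,…,m} ∪ {β} with β ∉ {1,…,m}, (α_i)_{i≥1} the sequence in {1,…,m} with α_i ≡ i (mod m), and let η ∈ Σ^G be defined by η(g) = α_1 for g ∈ Γ_1, η(g) = β for g ∈ Γ_1(R \ {1_G}), and η(g) = α_{n+1} for g ∈ Γ_{n+1}J(n)R for each n ≥ 1. Then for every n ≥ 1, Per(η, Γ_n) = ⋃_{i=0}^{n-1} Γ_{i+1}J(i)R; furthermore Per(η, Γ_1, β) = Γ_1(R \ {1_G}) and Per(η,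 Γ_1, α_1) = Γ_1. -/

import Mathlib

open Set Pointwise

/-- The left shift action of `G` on `G → A`: `(shift g x) h = x (g⁻¹ * h)`. -/
def shift {G : Type*} [Group G] {A : Type*} (g : G) (x : G → A) : G → A :=
  fun h => x (g⁻¹ * h)

/-- `Per x S a = {g ∈ G : x (γ⁻¹ g) = a for all γ ∈ S}`. -/
def Per {G : Type*} [Group G] {A : Type*} (x : G → A) (S : Set G) (a : A) : Set G :=
  {g | ∀ γ ∈ S, x (γ⁻¹ * g) = a}

/-- `PerAll x S = ⋃_{a ∈ A} Per x S a`. -/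
def PerAll {G : Type*} [Group G] {A : Type*} (x : G → A) (S : Set G) : Set G :=
  ⋃ a : A, Per x S a

/-- The sets `J(m)` of the Toeplitz construction: `J(0) = {1}` and
`J(m) = D_m \ ⋃_{i=0}^{m-1} Γ_{i+1} J(i)` for `m ≥ 1`. -/
def Jset {G : Type*} [Group G] (Γ : ℕ → Set G) (D : ℕ → Set G) : ℕ → Set G
  | 0 => {1}
  | (m + 1) => D (m + 1) \ ⋃ i : Fin (m + 1), Γ (i.val + 1) * Jset Γ D i.val

/-- In the virtually abelian Toeplitz construction, for every
`n ≥ 1` one has `Per(η,Γₙ) = ⋃_{i=0}^{n-1} Γ_{i+1} J(i) R`; furthermore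
`Per(η,Γ₁,β) = Γ₁(R \\ {1})` and `Per(η,Γ₁,α₁) = Γ₁`. -/
theorem per_eta_union_formula
    {G : Type*} [Group G] [Countable G]
    (Gp : Subgroup G) (hN : Gp.Normal) (hFI : Gp.FiniteIndex)
    (hab : ∀ x ∈ Gp, ∀ y ∈ Gp, x * y = y * x)
    (R : Set G) (hRfin : R.Finite) (hR1 : (1 : G) ∈ R)
    (hRtrans : ∀ g : G, ∃! r, r ∈ R ∧ g⁻¹ * r ∈ Gp)
    (Γ : ℕ → Subgroup G)
    (hΓle : ∀ i, 1 ≤ i → Γ i ≤ Gp)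
    (hdec : ∀ i, 1 ≤ i → Γ (i + 1) < Γ i)
    (hfin : ∀ i, 1 ≤ i → (Γ i).FiniteIndex)
    (hcap : (⋂ i, ⋂ (_ : 1 ≤ i), (Γ i : Set G)) = {1})
    (D : ℕ → Set G)
    (hDfin : ∀ i, 1 ≤ i → (D i).Finite)
    (hDsub : ∀ i, 1 ≤ i → D i ⊆ (Gp : Set G))
    (htrans : ∀ i, 1 ≤ i → ∀ g ∈ Gp, ∃! d, d ∈ D i ∧ g⁻¹ * d ∈ Γ i)
    (hone : ∀ i, 1 ≤ i → (1 : G) ∈ D i)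
    (hmono : ∀ i, 1 ≤ i → D i ⊆ D (i + 1))
    (hcover : (Gp : Set G) = ⋃ i, ⋃ (_ : 1 ≤ i), D i)
    (hdecomp : ∀ i j, 1 ≤ i → i < j →
      D j = ⋃ γ ∈ D j ∩ (Γ i : Set G), (fun d => γ * d) '' D i)
    (m : ℕ) (hm : 2 ≤ m)
    (αseq : ℕ → Fin m) (hα : ∀ i, 1 ≤ i → ((αseq i : ℕ) + 1) % m = i % m)
    (η : G → Option (Fin m))
    (hη1 : ∀ g ∈ (Γ 1 : Set G), η g = some (αseq 1))
    (hηβ : ∀ g ∈ (Γ 1 : Set G) * (R \ {1}), η g = none)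
    (hηn : ∀ n, 1 ≤ n → ∀ g ∈ (Γ (n + 1) : Set G)
        * Jset (fun k => (Γ k : Set G)) D n * R,
      η g = some (αseq (n + 1))) :
    (∀ n, 1 ≤ n → PerAll η (Γ n : Set G) =
      ⋃ i ∈ Finset.range n,
        (Γ (i + 1) : Set G) * Jset (fun k => (Γ k : Set G)) D i * R) ∧
    Per η (Γ 1 : Set G) none = (Γ 1 : Set G) * (R \ {1}) ∧
    Per η (Γ 1 : Set G) (some (αseq 1)) = (Γ 1 : Set G) := by
  classical
  -- abbreviations
  set Γ' : ℕ → Set G := fun k => (Γ k : Set G) with hΓ'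
  set J : ℕ → Set G := Jset Γ' D with hJdef
  -- monotonicity of the Γ chain
  have hΓmono : ∀ i j, 1 ≤ i → i ≤ j → Γ j ≤ Γ i := by
    intro i j hi hij
    induction j, hij using Nat.le_induction with
    | base => exact le_rfl
    | succ k hk ih => exact le_trans (le_of_lt (hdec k (le_trans hi hk))) ih
  have hJ0 : J 0 = {1} := by rw [hJdef]; simp only [Jset]
  have hJsucc : ∀ k : ℕ, J (k+1) = D (k+1) \ ⋃ i : Fin (k+1), Γ' (i.val + 1) * J i.val := by
    intro k; rw [hJdef]; simp only [Jset]
  have hJGp : ∀ k, J k ⊆ (Gp : Set G) := by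
    intro k
    match k with
    | 0 =>
      intro x hx
      rw [hJ0] at hx
      rw [hx]
      exact Gp.one_mem
    | (k+1) =>
      intro x hx
      rw [hJsucc] at hx
      exact hDsub (k+1) (by omega) hx.1
  -- Lemma A : Gp is covered by the sets Γ_{i+1} J i
  have lemA : ∀ x ∈ (Gp : Set G), ∃ i, x ∈ Γ' (i+1) * J i := by
    intro x hx
    rw [hcover] at hx
    simp only [Set.mem_iUnion] at hx
    obtain ⟨k, hk1, hxk⟩ := hx
    obtain ⟨k, rfl⟩ : ∃ k', k = k'+1 := ⟨k-1, by omega⟩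
    by_cases h : x ∈ ⋃ i : Fin (k+1), Γ' (i.val+1) * J i.val
    · obtain ⟨i, hi⟩ := Set.mem_iUnion.mp h
      exact ⟨i.val, hi⟩
    · refine ⟨k+1, 1, (Γ (k+2)).one_mem, x, ?_, one_mul x⟩
      rw [hJsucc]
      exact ⟨hxk, h⟩
  -- Lemma B : if e ∈ J ℓ and 1 ≤ k ≤ ℓ then some Γ_k translate of e lies in J k
  have lemB : ∀ l k, 1 ≤ k → k ≤ l → ∀ e ∈ J l, ∃ γ ∈ Γ k, γ * e ∈ J k := by
    intro l k hk hkl e he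
    rcases eq_or_lt_of_le hkl with rfl | hlt
    · exact ⟨1, (Γ k).one_mem, by simpa using he⟩
    · obtain ⟨l', rfl⟩ : ∃ l', l = l'+1 := ⟨l-1, by omega⟩
      rw [hJsucc] at he
      have heD : e ∈ D (l'+1) := he.1
      rw [hdecomp k (l'+1) hk hlt] at heD
      simp only [Set.mem_iUnion, Set.mem_image] at heD
      obtain ⟨γ, hγ, e', he', rfl⟩ := heD
      refine ⟨γ⁻¹, (Γ k).inv_mem hγ.2, ?_⟩
      rw [inv_mul_cancel_left]
      obtain ⟨k', rfl⟩ : ∃ k'', k = k''+1 := ⟨k-1, by omega⟩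
      rw [hJsucc]
      refine ⟨he', ?_⟩
      intro hbad
      obtain ⟨i, hi⟩ := Set.mem_iUnion.mp hbad
      obtain ⟨δ, hδ, u, hu, hdu⟩ := hi
      apply he.2
      refine Set.mem_iUnion.mpr ⟨⟨i.val, by omega⟩, ?_⟩
      have hγi : γ ∈ Γ (i.val + 1) :=
        hΓmono (i.val+1) (k'+1) (by omega) (by have := i.isLt; omega) hγ.2
      exact ⟨γ * δ, (Γ (i.val+1)).mul_mem hγi hδ, u, hu, by
        show γ * δ * u = γ * e'
        rw [mul_assoc, show δ * u = e' from hdu]⟩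
  -- Lemma D : if d ∈ J n and γ₀ ∈ Γ n \ Γ (n+1) then γ₀ d ∉ Γ_{n+1} J n
  have lemD : ∀ n, 1 ≤ n → ∀ d ∈ J n, ∀ γ₀ ∈ Γ n, γ₀ ∉ Γ (n+1) →
      γ₀ * d ∉ Γ' (n+1) * J n := by
    intro n hn d hd γ₀ hγ₀n hγ₀ hbad
    obtain ⟨δ, hδ, e, he, hde⟩ := Set.mem_mul.mp hbad
    have hdGp : d ∈ (Gp : Set G) := hJGp n hd
    have hdD : d ∈ D n := by
      obtain ⟨n', rfl⟩ : ∃ n', n = n'+1 := ⟨n-1, by omega⟩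
      rw [hJsucc] at hd; exact hd.1
    have heD : e ∈ D n := by
      obtain ⟨n', rfl⟩ : ∃ n', n = n'+1 := ⟨n-1, by omega⟩
      rw [hJsucc] at he; exact he.1
    obtain ⟨d₀, _, huniq⟩ := htrans n hn d hdGp
    have h1 : d = d₀ := huniq d ⟨hdD, by simpa using (Γ n).one_mem⟩
    have hcomm : d⁻¹ * e = δ⁻¹ * γ₀ := by
      have he' : e = δ⁻¹ * (γ₀ * d) := by rw [← hde, inv_mul_cancel_left]
      have hx : δ⁻¹ * γ₀ ∈ Gp :=
        Gp.mul_mem (Gp.inv_mem (hΓle (n+1) (by omega) hδ)) (hΓle n hn hγ₀n)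
      have := hab (δ⁻¹ * γ₀) hx d hdGp
      rw [he']
      calc d⁻¹ * (δ⁻¹ * (γ₀ * d)) = d⁻¹ * (δ⁻¹ * γ₀ * d) := by rw [mul_assoc]
        _ = d⁻¹ * (d * (δ⁻¹ * γ₀)) := by rw [this]
        _ = δ⁻¹ * γ₀ := by rw [inv_mul_cancel_left]
    have heΓ : d⁻¹ * e ∈ Γ n := by
      rw [hcomm]
      exact (Γ n).mul_mem ((Γ n).inv_mem (hΓmono n (n+1) hn (by omega) hδ)) hγ₀n
    have h2 : e = d₀ := huniq e ⟨heD, heΓ⟩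
    have hed : e = d := h2.trans h1.symm
    apply hγ₀
    have : δ = γ₀ := by
      have := hde
      rw [hed] at this
      exact mul_right_cancel this
    rw [← this]
    exact hδ
  -- Lemma C : for d ∈ J j, j ≥ n ≥ 1, translates of d in Γ n hit J n and J (n+1)
  have lemC : ∀ n, 1 ≤ n → ∀ j, n ≤ j → ∀ d ∈ J j,
      (∃ γ ∈ Γ n, γ * d ∈ J n) ∧ (∃ γ ∈ Γ n, γ * d ∈ J (n+1)) := by
    intro n hn j hj d hd
    refine ⟨lemB j n hn hj d hd, ?_⟩
    rcases eq_or_lt_of_le hj with rfl | hlt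
    · -- j = n : use an element of Γ n \ Γ (n+1)
      obtain ⟨γ₀, hγ₀n, hγ₀⟩ := SetLike.exists_of_lt (hdec n hn)
      have hγ₀d : γ₀ * d ∈ (Gp : Set G) := Gp.mul_mem (hΓle n hn hγ₀n) (hJGp n hd)
      obtain ⟨l, hl⟩ := lemA _ hγ₀d
      obtain ⟨δ, hδ, e, he, hde⟩ := Set.mem_mul.mp hl
      have hlge : n + 1 ≤ l := by
        by_contra hcon
        push_neg at hcon
        rcases Nat.lt_succ_iff_lt_or_eq.mp hcon with hlt' | heq
        · -- l < n : contradicts d ∈ J n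
          obtain ⟨n', rfl⟩ : ∃ n', n = n'+1 := ⟨n-1, by omega⟩
          rw [hJsucc] at hd
          apply hd.2
          refine Set.mem_iUnion.mpr ⟨⟨l, by omega⟩, ?_⟩
          have hγΓ : γ₀⁻¹ * δ ∈ Γ (l+1) :=
            (Γ (l+1)).mul_mem ((Γ (l+1)).inv_mem (hΓmono (l+1) (n'+1) (by omega) (by omega) hγ₀n)) hδ
          exact ⟨γ₀⁻¹ * δ, hγΓ, e, he, by
            show γ₀⁻¹ * δ * e = d
            rw [mul_assoc, hde, inv_mul_cancel_left]⟩
        · -- l = n : contradicts Lemma D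
          exact lemD n hn d hd γ₀ hγ₀n hγ₀ (heq ▸ hl)
      obtain ⟨γ', hγ', hγ'e⟩ := lemB l (n+1) (by omega) hlge e he
      refine ⟨γ' * δ⁻¹ * γ₀, ?_, ?_⟩
      · exact (Γ n).mul_mem ((Γ n).mul_mem (hΓmono n (n+1) hn (by omega) hγ')
          ((Γ n).inv_mem (hΓmono n (l+1) hn (by omega) hδ))) hγ₀n
      · have hgd : γ₀ * d = δ * e := hde.symm
        have heq2 : γ' * δ⁻¹ * γ₀ * d = γ' * e := by
          calc γ' * δ⁻¹ * γ₀ * d = γ' * δ⁻¹ * (γ₀ * d) := by group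
            _ = γ' * δ⁻¹ * (δ * e) := by rw [hgd]
            _ = γ' * e := by group
        rw [heq2]
        exact hγ'e
    · -- n < j
      obtain ⟨γ, hγ, h⟩ := lemB j (n+1) (by omega) hlt d hd
      exact ⟨γ, hΓmono n (n+1) hn (by omega) hγ, h⟩
  -- coset decomposition g = x * r
  have hdecg : ∀ g : G, ∃ x ∈ (Gp : Set G), ∃ r ∈ R, g = x * r := by
    intro g
    obtain ⟨r, ⟨hrR, hrG⟩, _⟩ := hRtrans g
    have h1 : r⁻¹ * g ∈ Gp := by
      have := Gp.inv_mem hrG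
      rwa [mul_inv_rev, inv_inv] at this
    have h2 := hN.conj_mem _ h1 g
    have h3 : g * (r⁻¹ * g) * g⁻¹ = g * r⁻¹ := by group
    rw [h3] at h2
    exact ⟨g * r⁻¹, h2, r, hrR, by group⟩
  -- membership helper
  have hmem3 : ∀ (i : ℕ) (γ : G), γ ∈ Γ (i+1) → ∀ d ∈ J i, ∀ r ∈ R,
      γ * d * r ∈ Γ' (i+1) * J i * R := by
    intro i γ hγ d hd r hr
    exact ⟨γ * d, Set.mul_mem_mul hγ hd, r, hr, rfl⟩
  -- Key : any Per set is contained in the union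
  have key : ∀ n, 1 ≤ n → ∀ a g, g ∈ Per η (Γ n : Set G) a →
      g ∈ ⋃ i ∈ Finset.range n, Γ' (i+1) * J i * R := by
    intro n hn a g hg
    obtain ⟨x, hx, r, hr, rfl⟩ := hdecg g
    obtain ⟨j, hj⟩ := lemA x hx
    obtain ⟨δ, hδ, d, hd, hxd⟩ := Set.mem_mul.mp hj
    by_cases hjn : j < n
    · refine Set.mem_iUnion₂.mpr ⟨j, Finset.mem_range.mpr hjn, ?_⟩
      rw [← hxd]
      exact hmem3 j δ hδ d hd r hr
    · exfalso
      push_neg at hjn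
      have hδn : δ ∈ Γ n := hΓmono n (j+1) hn (by omega) hδ
      obtain ⟨⟨γ₁, hγ₁, hγ₁d⟩, ⟨γ₂, hγ₂, hγ₂d⟩⟩ := lemC n hn j hjn d hd
      have hval : ∀ (γ : G), γ ∈ Γ n → ∀ k, 1 ≤ k → γ * d ∈ J k →
          some (αseq (k+1)) = a := by
        intro γ hγ k hk hγd
        have hmem : (δ * γ⁻¹ : G) ∈ (Γ n : Set G) := (Γ n).mul_mem hδn ((Γ n).inv_mem hγ)
        have := hg (δ * γ⁻¹) hmem
        have heq : (δ * γ⁻¹)⁻¹ * (x * r) = γ * d * r := by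
          rw [← hxd]; group
        rw [heq] at this
        have hm' := hmem3 k 1 (Γ (k+1)).one_mem _ hγd r hr
        rw [one_mul] at hm'
        rw [hηn k hk _ hm'] at this
        exact this
      have h1 := hval γ₁ hγ₁ n hn hγ₁d
      have h2 := hval γ₂ hγ₂ (n+1) (by omega) hγ₂d
      have hsome : αseq (n+1) = αseq (n+2) := by
        have := h1.trans h2.symm
        exact Option.some.inj this
      have e1 := hα (n+1) (by omega)
      have e2 := hα (n+2) (by omega)
      rw [hsome] at e1
      have : (n+1) % m = (n+2) % m := by rw [← e1, ← e2]
      have hdvd := (Nat.modEq_iff_dvd' (by omega)).mp this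
      have := Nat.le_of_dvd one_pos (by simpa using hdvd)
      omega
  -- Backward : each piece is contained in a Per set
  have bwd : ∀ n, 1 ≤ n → ∀ i, i < n → ∀ g ∈ Γ' (i+1) * J i * R,
      ∃ a, g ∈ Per η (Γ n : Set G) a := by
    intro n hn i hin g hg
    obtain ⟨y, hy, r, hr, rfl⟩ := Set.mem_mul.mp hg
    obtain ⟨γ, hγ, d, hd, rfl⟩ := Set.mem_mul.mp hy
    match i, hd with
    | 0, hd =>
      rw [hJ0] at hd
      rw [Set.mem_singleton_iff] at hd
      subst hd
      by_cases hr1 : r = 1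
      · subst hr1
        refine ⟨some (αseq 1), fun γ' hγ' => ?_⟩
        apply hη1
        have : γ'⁻¹ * (γ * 1 * 1) = γ'⁻¹ * γ := by group
        rw [this]
        exact (Γ 1).mul_mem ((Γ 1).inv_mem (hΓmono 1 n le_rfl hn hγ')) hγ
      · refine ⟨none, fun γ' hγ' => ?_⟩
        apply hηβ
        have : γ'⁻¹ * (γ * 1 * r) = (γ'⁻¹ * γ) * r := by group
        rw [this]
        exact ⟨γ'⁻¹ * γ, (Γ 1).mul_mem ((Γ 1).inv_mem (hΓmono 1 n le_rfl hn hγ')) hγ,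
          r, ⟨hr, hr1⟩, rfl⟩
    | (i+1), hd =>
      refine ⟨some (αseq (i+2)), fun γ' hγ' => ?_⟩
      apply hηn (i+1) (by omega)
      have : γ'⁻¹ * (γ * d * r) = (γ'⁻¹ * γ) * d * r := by group
      rw [this]
      refine hmem3 (i+1) (γ'⁻¹ * γ) ?_ d hd r hr
      exact (Γ (i+2)).mul_mem ((Γ (i+2)).inv_mem (hΓmono (i+2) n (by omega) hin hγ')) hγ
  -- assemble the three claims
  refine ⟨?_, ?_, ?_⟩
  · intro n hn
    ext g
    constructor
    · intro hg
      obtain ⟨a, ha⟩ := Set.mem_iUnion.mp hg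
      exact key n hn a g ha
    · intro hg
      obtain ⟨i, hi, hgi⟩ := Set.mem_iUnion₂.mp hg
      obtain ⟨a, ha⟩ := bwd n hn i (Finset.mem_range.mp hi) g hgi
      exact Set.mem_iUnion.mpr ⟨a, ha⟩
  · ext g
    constructor
    · intro hg
      have hg' := key 1 le_rfl none g hg
      obtain ⟨i, hi, hgi⟩ := Set.mem_iUnion₂.mp hg'
      have hi0 : i = 0 := by have := Finset.mem_range.mp hi; omega
      subst hi0
      obtain ⟨y, hy, r, hr, rfl⟩ := Set.mem_mul.mp hgi
      obtain ⟨γ, hγ, d, hd, rfl⟩ := Set.mem_mul.mp hy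
      rw [hJ0, Set.mem_singleton_iff] at hd
      subst hd
      by_cases hr1 : r = 1
      · exfalso
        subst hr1
        have := hg 1 (Γ 1).one_mem
        have hγ1 : γ * 1 * 1 ∈ (Γ 1 : Set G) := by simpa [hΓ'] using hγ
        rw [show (1:G)⁻¹ * (γ * 1 * 1) = γ * 1 * 1 by group, hη1 _ hγ1] at this
        cases this
      · exact ⟨γ * 1, by simpa [hΓ'] using hγ, r, ⟨hr, hr1⟩, rfl⟩
    · intro hg γ' hγ'
      obtain ⟨γ, hγ, r, ⟨hr, hr1⟩, rfl⟩ := Set.mem_mul.mp hg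
      apply hηβ
      have : γ'⁻¹ * (γ * r) = (γ'⁻¹ * γ) * r := by group
      rw [this]
      exact ⟨γ'⁻¹ * γ, (Γ 1).mul_mem ((Γ 1).inv_mem hγ') hγ, r, ⟨hr, hr1⟩, rfl⟩
  · ext g
    constructor
    · intro hg
      have hg' := key 1 le_rfl (some (αseq 1)) g hg
      obtain ⟨i, hi, hgi⟩ := Set.mem_iUnion₂.mp hg'
      have hi0 : i = 0 := by have := Finset.mem_range.mp hi; omega
      subst hi0
      obtain ⟨y, hy, r, hr, rfl⟩ := Set.mem_mul.mp hgi
      obtain ⟨γ, hγ, d, hd, rfl⟩ := Set.mem_mul.mp hy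
      rw [hJ0, Set.mem_singleton_iff] at hd
      subst hd
      by_cases hr1 : r = 1
      · subst hr1
        simpa [hΓ'] using hγ
      · exfalso
        have := hg 1 (Γ 1).one_mem
        have hβ : η (γ * 1 * r) = none := by
          apply hηβ
          exact ⟨γ * 1, by simpa [hΓ'] using hγ, r, ⟨hr, hr1⟩, rfl⟩
        rw [show (1:G)⁻¹ * (γ * 1 * r) = γ * 1 * r by group, hβ] at this
        cases this
    · intro hg γ' hγ'
      apply hη1
      exact (Γ 1).mul_mem ((Γ 1).inv_mem hγ') hg
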